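/- For every n ≥ 1, the infinite word k has at most two distinct right-special factors of length n. -/

import Mathlib

/-- The substitution `h` with `h(1) = 110` and `h(0) = 11`. -/
def hsub : ℕ → List ℕ
  | 0 => [1, 1]
  | 1 => [1, 1, 0]
  | _ => []

/-- `h` extended to words by concatenation. -/
def happ (w : List ℕ) : List ℕ := w.flatMap hsub

/-- `K n = h^n(1)`. -/
def Kword (n : ℕ) : List ℕ := happ^[n] [1]

/-- `w` is a factor of the infinite word `k` (indexed from 1):
`w = k_i k_{i+1} ⋯ k_{i+|w|−1}` for some `i ≥ 1`. -/
def IsFactor (k : ℕ → ℕ) (w : List ℕ) : Prop :=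
  ∃ i : ℕ, 1 ≤ i ∧ ∀ j : ℕ, j < w.length → w.getD j 0 = k (i + j)

/-- `w` is a right-special factor of `k`: both `w0` and `w1` are factors of `k`. -/
def IsRightSpecial (k : ℕ → ℕ) (w : List ℕ) : Prop :=
  IsFactor k (w ++ [0]) ∧ IsFactor k (w ++ [1])

namespace RSaux

/-- factors of the infinite word, as infixes of some `Kword`. -/
def Fact (w : List ℕ) : Prop := ∃ m, w <:+: Kword m

def RS (w : List ℕ) : Prop := Fact (w ++ [0]) ∧ Fact (w ++ [1])

def Bin (w : List ℕ) : Prop := ∀ a ∈ w, a = 0 ∨ a = 1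

def psi (w : List ℕ) : List ℕ := happ w ++ [1, 1]

def Mainw : ℕ → List ℕ
  | 0 => [1]
  | n + 1 => psi (Mainw n)

def Sidew : ℕ → List ℕ
  | 0 => [1, 1, 1]
  | n + 1 => psi (Sidew n)

def Branchw : ℕ → List ℕ
  | 0 => [1, 1]
  | n + 1 => psi (Branchw n)

lemma happ_nil : happ [] = [] := rfl

lemma happ_cons (a : ℕ) (w : List ℕ) : happ (a :: w) = hsub a ++ happ w := rfl

lemma happ_append (a b : List ℕ) : happ (a ++ b) = happ a ++ happ b :=
  List.flatMap_append

lemma Kword_succ (m : ℕ) : Kword (m + 1) = happ (Kword m) :=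
  Function.iterate_succ_apply' happ m [1]

lemma bin_infix {u w : List ℕ} (hu : Bin u) (h : w <:+: u) : Bin w :=
  fun a ha => hu a (h.subset ha)

lemma bin_append {u v : List ℕ} (hu : Bin u) (hv : Bin v) : Bin (u ++ v) := by
  intro a ha; rcases List.mem_append.1 ha with h | h
  · exact hu a h
  · exact hv a h

lemma bin_happ {u : List ℕ} : Bin (happ u) := by
  intro a ha
  rcases List.mem_flatMap.1 ha with ⟨b, _, hb⟩
  rcases b with _ | _ | b <;> simp [hsub] at hb <;> omega

lemma bin_Kword (m : ℕ) : Bin (Kword m) := by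
  induction m with
  | zero => intro a ha; simp [Kword] at ha; omega
  | succ m ih => rw [Kword_succ]; exact bin_happ

lemma length_hsub_le (a : ℕ) : (hsub a).length ≤ 3 := by
  rcases a with _ | _ | a <;> simp [hsub]

lemma length_hsub_bin {a : ℕ} (h : a = 0 ∨ a = 1) : 2 ≤ (hsub a).length := by
  rcases h with h | h <;> subst h <;> simp [hsub]

lemma length_happ_ge {u : List ℕ} (hu : Bin u) : 2 * u.length ≤ (happ u).length := by
  induction u with
  | nil => simp [happ]
  | cons a w ih =>
    rw [happ_cons, List.length_append, List.length_cons]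
    have h1 : 2 ≤ (hsub a).length := length_hsub_bin (hu a (List.mem_cons_self))
    have h2 := ih (fun x hx => hu x (List.mem_cons_of_mem _ hx))
    omega

lemma length_happ {u : List ℕ} (hu : Bin u) :
    (happ u).length = 2 * u.length + u.count 1 := by
  induction u with
  | nil => simp [happ]
  | cons a w ih =>
    have h2 := ih (fun x hx => hu x (List.mem_cons_of_mem _ hx))
    rw [happ_cons, List.length_append, h2, List.length_cons, List.count_cons]
    rcases hu a (List.mem_cons_self) with h | h <;> subst h <;> simp [hsub] <;> ring

lemma count_happ {u : List ℕ} (hu : Bin u) : (happ u).count 1 = 2 * u.length := by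
  induction u with
  | nil => simp [happ]
  | cons a w ih =>
    have h2 := ih (fun x hx => hu x (List.mem_cons_of_mem _ hx))
    rw [happ_cons, List.count_append, h2, List.length_cons]
    rcases hu a (List.mem_cons_self) with h | h <;> subst h <;> simp [hsub] <;> ring

lemma happ_suffix {u v : List ℕ} (h : u <:+ v) : happ u <:+ happ v := by
  rcases h with ⟨t, rfl⟩; exact ⟨happ t, (happ_append t u).symm⟩

lemma happ_prefix {u v : List ℕ} (h : u <+: v) : happ u <+: happ v := by
  rcases h with ⟨t, rfl⟩; exact ⟨happ t, (happ_append u t).symm⟩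

lemma psi_suffix {u v : List ℕ} (h : u <:+ v) : psi u <:+ psi v := by
  rcases happ_suffix h with ⟨t, ht⟩
  exact ⟨t, by simp [psi, ← ht]⟩

/-- suffix ++ prefix is an infix of the concatenation -/
lemma suffix_append_prefix_infix {a A b B : List ℕ} (h1 : a <:+ A) (h2 : b <+: B) :
    a ++ b <:+: A ++ B := by
  rcases h1 with ⟨s, rfl⟩; rcases h2 with ⟨t, rfl⟩
  exact ⟨s, t, by simp⟩

lemma suffix_eq_of_length {u v l : List ℕ} (h1 : u <:+ l) (h2 : v <:+ l)
    (h : u.length = v.length) : u = v :=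
  (List.suffix_of_suffix_length_le h1 h2 h.le).eq_of_length h


def NoDD (w : List ℕ) : Prop := ¬ ([0, 0] <:+: w)

lemma noDD_infix {u w : List ℕ} (hu : NoDD u) (h : w <:+: u) : NoDD w :=
  fun hc => hu (hc.trans h)

lemma happ_eq_nil {x : List ℕ} (hx : Bin x) (h : happ x = []) : x = [] := by
  cases x with
  | nil => rfl
  | cons a w =>
    rcases hx a (List.mem_cons_self) with h1 | h1 <;> subst h1 <;>
      simp [happ_cons, hsub] at h

lemma happ_ne_zero_cons {x t : List ℕ} (hx : Bin x) : happ x ≠ 0 :: t := by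
  cases x with
  | nil => simp [happ]
  | cons a w =>
    rcases hx a (List.mem_cons_self) with h1 | h1 <;> subst h1 <;>
      simp [happ_cons, hsub]

lemma happ_one_ne_zero_cons {x t : List ℕ} (hx : Bin x) : happ x ++ [1] ≠ 0 :: t := by
  cases x with
  | nil => simp [happ]
  | cons a w =>
    rcases hx a (List.mem_cons_self) with h1 | h1 <;> subst h1 <;>
      simp [happ_cons, hsub]

lemma happ_length_ne_one {x : List ℕ} (hx : Bin x) : (happ x).length ≠ 1 := by
  have := length_happ hx
  intro h
  have hxl : x.length = 0 := by omega
  have : x = [] := List.length_eq_zero_iff.1 hxl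
  subst this; simp [happ] at h

lemma bin_tail {a : ℕ} {x : List ℕ} (h : Bin (a :: x)) : Bin x :=
  fun b hb => h b (List.mem_cons_of_mem _ hb)

lemma noDD_tail {a : ℕ} {x : List ℕ} (h : NoDD (a :: x)) : NoDD x :=
  noDD_infix h ⟨[a], [], by simp⟩


lemma happ_ne_one_zero_cons {y t : List ℕ} (hy : Bin y) : happ y ≠ 1 :: 0 :: t := by
  cases y with
  | nil => simp [happ]
  | cons a w =>
    rcases hy a (List.mem_cons_self) with h1 | h1 <;> subst h1 <;>
      simp [happ_cons, hsub]

lemma happ_one_ne_one_zero_cons {x t : List ℕ} (hx : Bin x) : happ x ++ [1] ≠ 1 :: 0 :: t := by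
  cases x with
  | nil =>
    intro h
    have := congrArg List.length h
    simp [happ] at this
  | cons a w =>
    rcases hx a (List.mem_cons_self) with h1 | h1 <;> subst h1 <;>
      simp [happ_cons, hsub]

/-- master word-equation lemma, by strong induction. -/
lemma formAll : ∀ N x y, x.length + y.length ≤ N → Bin x → Bin y →
    ((happ x ++ [1] = happ y → False)
    ∧ (NoDD x → happ x ++ [1] = 1 :: happ y →
        (x = [] ∧ y = []) ∨ (x = [0] ∧ y = [0]))
    ∧ (NoDD x → 1 :: (happ x ++ [1]) = happ y →
        (x = [] ∧ y = [0]) ∨ (x = [0] ∧ y = [0, 0]))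
    ∧ (happ x = 1 :: happ y → False)) := by
  intro N
  induction N with
  | zero =>
    intro x y hN hx hy
    have hx0 : x = [] := List.length_eq_zero_iff.1 (by omega)
    have hy0 : y = [] := List.length_eq_zero_iff.1 (by omega)
    subst hx0; subst hy0
    refine ⟨by simp [happ], fun _ h => Or.inl ⟨rfl, rfl⟩, fun _ h => by simp [happ] at h,
      by simp [happ]⟩
  | succ N ih =>
    intro x y hN hx hy
    refine ⟨?_, ?_, ?_, ?_⟩
    -- α : happ x ++ [1] = happ y → False
    · intro h
      cases x with
      | nil =>
        exact happ_length_ne_one hy (by rw [show happ y = [1] from h.symm]; rfl)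
      | cons a x' =>
        cases y with
        | nil =>
          rcases hx a (List.mem_cons_self) with ha | ha <;> subst ha <;>
            simp [happ_cons, hsub, happ] at h
        | cons b y' =>
          rcases hx a (List.mem_cons_self) with ha | ha <;> subst ha <;>
          rcases hy b (List.mem_cons_self) with hb | hb <;> subst hb <;>
          simp only [happ_cons, hsub, List.cons_append, List.append_assoc,
            List.cons.injEq, List.nil_append, true_and] at h
          · -- x = 0::x', y = 0::y' : happ x' ++ [1] = happ y'
            exact (ih x' y' (by simp at hN ⊢; omega) (bin_tail hx) (bin_tail hy)).1 h
          · -- x = 0::x', y = 1::y' : happ x' ++ [1] = 0 :: happ y'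
            exact happ_one_ne_zero_cons (bin_tail hx) h
          · -- x = 1::x', y = 0::y' : 0 :: (happ x' ++ [1]) = happ y'
            exact happ_ne_zero_cons (bin_tail hy) h.symm
          · -- x = 1::x', y = 1::y'
            exact (ih x' y' (by simp at hN ⊢; omega) (bin_tail hx) (bin_tail hy)).1 h
    -- β : happ x ++ [1] = 1 :: happ y
    · intro hnd h
      cases x with
      | nil =>
        left
        refine ⟨rfl, ?_⟩
        have h' : (1 : ℕ) :: ([] : List ℕ) = 1 :: happ y := h
        injection h' with h1 h2
        exact happ_eq_nil hy h2.symm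
      | cons a x' =>
        rcases hx a (List.mem_cons_self) with ha | ha <;> subst ha <;>
          simp only [happ_cons, hsub, List.cons_append, List.append_assoc,
            List.cons.injEq, List.nil_append, true_and] at h
        · -- x = 0::x' : 1 :: (happ x' ++ [1]) = happ y
          have := (ih x' y (by simp at hN ⊢; omega) (bin_tail hx) hy).2.2.1
            (noDD_tail hnd) h
          rcases this with ⟨hx', hy'⟩ | ⟨hx', hy'⟩
          · right; exact ⟨by rw [hx'], hy'⟩
          · exfalso; apply hnd; subst hx'; exact ⟨[], [], rfl⟩
        · -- x = 1::x' : 1 :: 0 :: (happ x' ++ [1]) = happ y? shape: h : 0 :: (happ x' ++ [1]) = happ y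
          exact absurd h.symm (happ_ne_one_zero_cons hy)
    -- γ : 1 :: (happ x ++ [1]) = happ y
    · intro hnd h
      cases y with
      | nil => simp [happ] at h
      | cons b y' =>
        rcases hy b (List.mem_cons_self) with hb | hb <;> subst hb <;>
          simp only [happ_cons, hsub, List.cons_append, List.append_assoc,
            List.cons.injEq, List.nil_append, true_and] at h
        · -- y = 0::y' : happ x ++ [1] = 1 :: happ y'
          have := (ih x y' (by simp at hN ⊢; omega) hx (bin_tail hy)).2.1 hnd h
          rcases this with ⟨hx', hy'⟩ | ⟨hx', hy'⟩
          · left; exact ⟨hx', by rw [hy']⟩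
          · right; exact ⟨hx', by rw [hy']⟩
        · -- y = 1::y' : happ x ++ [1] = 1 :: 0 :: happ y' (h : ... = 0 :: happ y' after strip?)
          exact absurd h (happ_one_ne_one_zero_cons hx)
    -- A1 : happ x = 1 :: happ y → False
    · intro h
      cases x with
      | nil => simp [happ] at h
      | cons a x' =>
        rcases hx a (List.mem_cons_self) with ha | ha <;> subst ha <;>
          simp only [happ_cons, hsub, List.cons_append, List.cons.injEq,
            List.nil_append, true_and] at h
        · -- x = 0::x' : happ y = 1 :: happ x'
          exact (ih y x' (by simp at hN ⊢; omega) hy (bin_tail hx)).2.2.2 h.symm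
        · -- x = 1::x' : h : 1 :: 0 :: happ x' = happ y
          exact happ_ne_one_zero_cons hy h.symm

lemma Hinj : ∀ x y, Bin x → Bin y → happ x = happ y → x = y := by
  intro x
  induction x with
  | nil =>
    intro y _ hy h
    exact (happ_eq_nil hy h.symm).symm
  | cons a x' ih =>
    intro y hx hy h
    cases y with
    | nil =>
      exfalso
      have : happ (a :: x') = [] := by rw [h]; rfl
      have h2 := happ_eq_nil hx this
      simp at h2
    | cons b y' =>
      rcases hx a (List.mem_cons_self) with ha | ha <;> subst ha <;>
        rcases hy b (List.mem_cons_self) with hb | hb <;> subst hb <;>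
        simp only [happ_cons, hsub, List.cons_append, List.cons.injEq,
          List.nil_append, true_and] at h
      · exact congrArg (0 :: ·) (ih y' (bin_tail hx) (bin_tail hy) h)
      · exact absurd h (happ_ne_zero_cons (bin_tail hx))
      · exact absurd h.symm (happ_ne_zero_cons (bin_tail hy))
      · exact congrArg (1 :: ·) (ih y' (bin_tail hx) (bin_tail hy) h)

def SL (s : List ℕ) : Prop := s = [] ∨ s = [0] ∨ s = [1] ∨ s = [1, 0]

lemma A1' {x y : List ℕ} (hx : Bin x) (hy : Bin y) : happ x ≠ 1 :: happ y :=
  fun h => (formAll (x.length + y.length) x y le_rfl hx hy).2.2.2 h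

lemma Ustar {s1 s2 x y : List ℕ} (h1 : SL s1) (h2 : SL s2) (hx : Bin x) (hy : Bin y)
    (h : s1 ++ happ x = s2 ++ happ y) : s1 = s2 ∧ x = y := by
  rcases h1 with rfl | rfl | rfl | rfl <;> rcases h2 with rfl | rfl | rfl | rfl <;>
    simp only [List.nil_append, List.cons_append, List.cons.injEq, true_and] at h
  · exact ⟨rfl, Hinj _ _ hx hy h⟩
  · exact absurd h (happ_ne_zero_cons hx)
  · exact absurd h (A1' hx hy)
  · exact absurd h (happ_ne_one_zero_cons hx)
  · exact absurd h.symm (happ_ne_zero_cons hy)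
  · exact ⟨rfl, Hinj _ _ hx hy h⟩
  · exact absurd h (by omega)
  · exact absurd h (by omega)
  · exact absurd h.symm (A1' hy hx)
  · exact absurd h (by omega)
  · exact ⟨rfl, Hinj _ _ hx hy h⟩
  · exact absurd h (happ_ne_zero_cons hx)
  · exact absurd h.symm (happ_ne_one_zero_cons hy)
  · exact absurd h (by omega)
  · exact absurd h.symm (happ_ne_zero_cons hy)
  · exact ⟨rfl, Hinj _ _ hx hy h⟩

lemma noDD_happ : ∀ u, Bin u → ∀ A B, A ++ [0, 0] ++ B ≠ happ u := by
  intro u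
  induction u with
  | nil => intro _ A B h; simpa [happ] using congrArg List.length h
  | cons a u' ih =>
    intro hu A B h
    rcases hu a (List.mem_cons_self) with ha | ha <;> subst ha
    · rw [happ_cons] at h
      rcases A with _ | ⟨c, _ | ⟨d, A'⟩⟩ <;>
        simp only [hsub, List.cons_append, List.nil_append, List.cons.injEq] at h
      · omega
      · omega
      · exact ih (bin_tail hu) A' B h.2.2
    · rw [happ_cons] at h
      rcases A with _ | ⟨c, _ | ⟨d, _ | ⟨e, A'⟩⟩⟩ <;>
        simp only [hsub, List.cons_append, List.nil_append, List.cons.injEq] at h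
      · omega
      · omega
      · exact happ_ne_zero_cons (bin_tail hu) h.2.2.2.symm
      · exact ih (bin_tail hu) A' B h.2.2.2

lemma noDD_Kword (m : ℕ) : NoDD (Kword m) := by
  cases m with
  | zero =>
    rintro ⟨A, B, h⟩
    have := congrArg List.length h
    simp [Kword] at this
    omega
  | succ m =>
    rw [Kword_succ]
    rintro ⟨A, B, h⟩
    exact noDD_happ _ (bin_Kword m) A B h

lemma fact_noDD {w : List ℕ} (h : Fact w) : NoDD w := by
  rcases h with ⟨m, hm⟩
  exact noDD_infix (noDD_Kword m) hm

lemma fact_bin {w : List ℕ} (h : Fact w) : Bin w := by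
  rcases h with ⟨m, hm⟩
  exact bin_infix (bin_Kword m) hm

lemma fact_infix {w v : List ℕ} (h : Fact v) (hw : w <:+: v) : Fact w := by
  rcases h with ⟨m, hm⟩; exact ⟨m, hw.trans hm⟩

lemma happ_single (a : ℕ) : happ [a] = hsub a := by simp [happ]

lemma prefix_parse : ∀ u y, y <+: happ u →
    ∃ v p, y = happ v ++ p ∧ v <+: u ∧
      (p = [] ∨ ∃ b, p <+: hsub b ∧ p ≠ hsub b ∧ v ++ [b] <+: u) := by
  intro u
  induction u with
  | nil =>
    intro y hy
    rw [happ_nil, List.prefix_nil] at hy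
    exact ⟨[], [], by simp [hy, happ_nil], List.nil_prefix, Or.inl rfl⟩
  | cons b u' ih =>
    intro y hy
    rw [happ_cons] at hy
    rcases le_total y.length (hsub b).length with hl | hl
    · have hyb : y <+: hsub b :=
        List.prefix_of_prefix_length_le hy (List.prefix_append _ _) hl
      by_cases he : y = hsub b
      · exact ⟨[b], [], by simp [happ_single, he], ⟨u', rfl⟩, Or.inl rfl⟩
      · exact ⟨[], y, by simp [happ_nil], List.nil_prefix,
          Or.inr ⟨b, hyb, he, ⟨u', rfl⟩⟩⟩
    · have hby : hsub b <+: y :=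
        List.prefix_of_prefix_length_le (List.prefix_append _ _) hy hl
      rcases hby with ⟨y', rfl⟩
      have hy' : y' <+: happ u' := by
        rcases hy with ⟨t, ht⟩
        rw [List.append_assoc] at ht
        exact ⟨t, List.append_cancel_left ht⟩
      rcases ih y' hy' with ⟨v, p, hvp, hvu, hctx⟩
      refine ⟨b :: v, p, by rw [happ_cons, List.append_assoc, ← hvp], ?_, ?_⟩
      · rcases hvu with ⟨t, rfl⟩; exact ⟨t, rfl⟩
      · rcases hctx with rfl | ⟨bb, h1, h2, h3⟩
        · exact Or.inl rfl
        · refine Or.inr ⟨bb, h1, h2, ?_⟩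
          rcases h3 with ⟨t, rfl⟩
          exact ⟨t, by simp⟩

lemma suffix_parse : ∀ u x, x <:+ happ u →
    ∃ v s, x = s ++ happ v ∧ v <:+ u ∧
      (s = [] ∨ ∃ a, s <:+ hsub a ∧ s ≠ hsub a ∧ [a] ++ v <:+ u) := by
  intro u
  induction u using List.reverseRecOn with
  | nil =>
    intro x hx
    rw [happ_nil, List.suffix_nil] at hx
    exact ⟨[], [], by simp [hx, happ_nil], List.nil_suffix, Or.inl rfl⟩
  | append_singleton u' a ih =>
    intro x hx
    rw [happ_append, happ_single] at hx
    rcases le_total x.length (hsub a).length with hl | hl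
    · have hxa : x <:+ hsub a :=
        List.suffix_of_suffix_length_le hx (List.suffix_append _ _) hl
      by_cases he : x = hsub a
      · exact ⟨[a], [], by simp [happ_single, he], ⟨u', rfl⟩, Or.inl rfl⟩
      · exact ⟨[], x, by simp [happ_nil], List.nil_suffix,
          Or.inr ⟨a, hxa, he, ⟨u', rfl⟩⟩⟩
    · have hax : hsub a <:+ x :=
        List.suffix_of_suffix_length_le (List.suffix_append _ _) hx hl
      rcases hax with ⟨x', rfl⟩
      have hx' : x' <:+ happ u' := by
        rcases hx with ⟨t, ht⟩
        rw [← List.append_assoc] at ht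
        exact ⟨t, List.append_cancel_right ht⟩
      rcases ih x' hx' with ⟨v, s, hvs, hvu, hctx⟩
      refine ⟨v ++ [a], s, ?_, ?_, ?_⟩
      · rw [happ_append, happ_single, ← List.append_assoc, ← hvs]
      · rcases hvu with ⟨t, rfl⟩; exact ⟨t, by simp⟩
      · rcases hctx with rfl | ⟨aa, h1, h2, h3⟩
        · exact Or.inl rfl
        · refine Or.inr ⟨aa, h1, h2, ?_⟩
          rcases h3 with ⟨t, rfl⟩
          exact ⟨t, by simp⟩

lemma infix_split : ∀ u x, x <:+: happ u → 4 ≤ x.length →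
    ∃ u1 u2 x1 x2, u = u1 ++ u2 ∧ x = x1 ++ x2 ∧ x1 <:+ happ u1 ∧ x2 <+: happ u2 := by
  intro u
  induction u with
  | nil =>
    intro x hx hlen
    rw [happ_nil, List.infix_nil] at hx
    subst hx; simp at hlen
  | cons a u' ih =>
    intro x hx hlen
    rw [happ_cons] at hx
    rcases hx with ⟨A, B, hAB⟩
    rcases le_total (hsub a).length A.length with hl | hl
    · -- x is inside happ u'
      have hA : A <+: hsub a ++ happ u' := ⟨x ++ B, by rw [← List.append_assoc]; exact hAB⟩
      have hsa : hsub a <+: A :=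
        List.prefix_of_prefix_length_le (List.prefix_append _ _) hA hl
      rcases hsa with ⟨A', rfl⟩
      have : A' ++ x ++ B = happ u' := by
        have h2 : hsub a ++ (A' ++ x ++ B) = hsub a ++ happ u' := by
          simpa [List.append_assoc] using hAB
        exact List.append_cancel_left h2
      rcases ih x ⟨A', B, this⟩ hlen with ⟨u1, u2, x1, x2, h1, h2, h3, h4⟩
      refine ⟨a :: u1, u2, x1, x2, by simp [h1], h2, ?_, h4⟩
      rw [happ_cons]
      exact h3.trans (List.suffix_append _ _)
    · -- x starts inside hsub a
      have hA : A <+: hsub a := by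
        refine List.prefix_of_prefix_length_le ⟨x ++ B, by rw [← List.append_assoc]; exact hAB⟩
          (List.prefix_append _ _) hl
      rcases hA with ⟨r, hr⟩
      have hxB : x ++ B = r ++ happ u' := by
        have : A ++ (x ++ B) = A ++ (r ++ happ u') := by
          rw [← List.append_assoc, hAB, ← hr, List.append_assoc]
        exact List.append_cancel_left this
      have hrlen : r.length ≤ 3 := by
        have := length_hsub_le a
        have := congrArg List.length hr
        simp at this; omega
      have hrx : r <+: x := by
        refine List.prefix_of_prefix_length_le ⟨happ u', hxB.symm⟩ (List.prefix_append _ _) ?_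
        omega
      rcases hrx with ⟨x2, hx2⟩
      have hx2' : x2 ++ B = happ u' := by
        have : r ++ (x2 ++ B) = r ++ happ u' := by
          rw [← List.append_assoc, hx2]; exact hxB
        exact List.append_cancel_left this
      exact ⟨[a], u', r, x2, rfl, hx2.symm, by rw [happ_single]; exact ⟨A, hr⟩,
        ⟨B, hx2'⟩⟩

lemma full_parse {u x : List ℕ} (hx : x <:+: happ u) (hlen : 4 ≤ x.length) :
    ∃ s v p, x = s ++ happ v ++ p ∧ v <:+: u ∧
      (s = [] ∨ ∃ a, s <:+ hsub a ∧ s ≠ hsub a ∧ [a] ++ v <:+: u) ∧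
      (p = [] ∨ ∃ b, p <+: hsub b ∧ p ≠ hsub b ∧ v ++ [b] <:+: u) := by
  rcases infix_split u x hx hlen with ⟨u1, u2, x1, x2, rfl, rfl, h3, h4⟩
  rcases suffix_parse u1 x1 h3 with ⟨va, s, rfl, hva, hsctx⟩
  rcases prefix_parse u2 x2 h4 with ⟨vb, p, rfl, hvb, hpctx⟩
  refine ⟨s, va ++ vb, p, by rw [happ_append]; simp [List.append_assoc], 
    suffix_append_prefix_infix hva hvb, ?_, ?_⟩
  · rcases hsctx with rfl | ⟨a, h1, h2, h3'⟩
    · exact Or.inl rfl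
    · refine Or.inr ⟨a, h1, h2, ?_⟩
      have := suffix_append_prefix_infix h3' hvb
      rwa [List.append_assoc] at this
  · rcases hpctx with rfl | ⟨b, h1, h2, h3'⟩
    · exact Or.inl rfl
    · refine Or.inr ⟨b, h1, h2, ?_⟩
      have := suffix_append_prefix_infix hva h3'
      rwa [← List.append_assoc] at this

lemma concat_ne {X Y : List ℕ} {a b : ℕ} (h : a ≠ b) : X ++ [a] ≠ Y ++ [b] := by
  intro he
  have := congrArg List.getLast? he
  simp [List.getLast?_concat] at this
  exact h this

lemma prefix_hsub_cases {b : ℕ} {p : List ℕ} (hb : b = 0 ∨ b = 1)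
    (h1 : p <+: hsub b) (h2 : p ≠ hsub b) : p = [] ∨ p = [1] ∨ (p = [1, 1] ∧ b = 1) := by
  rcases h1 with ⟨t, ht⟩
  rcases hb with rfl | rfl <;>
    rcases p with _ | ⟨c, _ | ⟨d, _ | ⟨e, q⟩⟩⟩ <;>
    simp_all [hsub]

lemma suffix_hsub_cases {a : ℕ} {s : List ℕ} (ha : a = 0 ∨ a = 1)
    (h1 : s <:+ hsub a) (h2 : s ≠ hsub a) :
    (a = 0 ∧ (s = [] ∨ s = [1])) ∨ (a = 1 ∧ (s = [] ∨ s = [0] ∨ s = [1, 0])) := by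
  rcases h1 with ⟨t, ht⟩
  rcases ha with rfl | rfl <;>
    rcases t with _ | ⟨c, _ | ⟨d, _ | ⟨e, q⟩⟩⟩ <;>
    simp_all [hsub]

lemma SL_length {s : List ℕ} (h : SL s) : s.length ≤ 2 := by
  rcases h with rfl | rfl | rfl | rfl <;> simp

lemma EqMaster {s1 s2 x y : List ℕ} (h1 : SL s1) (h2 : SL s2) (hx : Bin x)
    (hy : Bin y) (hnd : NoDD x) (h : s1 ++ (happ x ++ [1]) = s2 ++ happ y) :
    x = [] ∨ x = [0] := by
  have F := formAll (x.length + y.length) x y le_rfl hx hy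
  rcases h1 with rfl | rfl | rfl | rfl <;> rcases h2 with rfl | rfl | rfl | rfl <;>
    simp only [List.nil_append, List.cons_append, List.cons.injEq, true_and] at h
  · exact absurd h F.1
  · exact absurd h (happ_one_ne_zero_cons hx)
  · rcases F.2.1 hnd h with ⟨hh, _⟩ | ⟨hh, _⟩
    · exact Or.inl hh
    · exact Or.inr hh
  · exact absurd h (happ_one_ne_one_zero_cons hx)
  · exact absurd h.symm (happ_ne_zero_cons hy)
  · exact absurd h F.1
  · exact absurd h (by omega)
  · exact absurd h (by omega)
  · rcases F.2.2.1 hnd h with ⟨hh, _⟩ | ⟨hh, _⟩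
    · exact Or.inl hh
    · exact Or.inr hh
  · exact absurd h (by omega)
  · exact absurd h F.1
  · exact absurd h (happ_one_ne_zero_cons hx)
  · exact absurd h.symm (happ_ne_one_zero_cons hy)
  · exact absurd h (by omega)
  · exact absurd h.symm (happ_ne_zero_cons hy)
  · exact absurd h F.1

lemma sctx_resolve {U s v : List ℕ} (bU : Bin U)
    (h : s = [] ∨ ∃ a, s <:+ hsub a ∧ s ≠ hsub a ∧ [a] ++ v <:+: U) :
    s = [] ∨ (s = [1] ∧ [0] ++ v <:+: U) ∨ ((s = [0] ∨ s = [1, 0]) ∧ [1] ++ v <:+: U) := by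
  rcases h with rfl | ⟨a, h1, h2, h3⟩
  · exact Or.inl rfl
  · have ha : a = 0 ∨ a = 1 := bU a (h3.subset (by simp))
    rcases suffix_hsub_cases ha h1 h2 with ⟨rfl, hs⟩ | ⟨rfl, hs⟩
    · rcases hs with rfl | rfl
      · exact Or.inl rfl
      · exact Or.inr (Or.inl ⟨rfl, h3⟩)
    · rcases hs with rfl | rfl | rfl
      · exact Or.inl rfl
      · exact Or.inr (Or.inr ⟨Or.inl rfl, h3⟩)
      · exact Or.inr (Or.inr ⟨Or.inr rfl, h3⟩)

lemma sres_SL {s : List ℕ} {P Q : Prop}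
    (h : s = [] ∨ (s = [1] ∧ P) ∨ ((s = [0] ∨ s = [1, 0]) ∧ Q)) : SL s := by
  rcases h with rfl | ⟨rfl, _⟩ | ⟨rfl | rfl, _⟩
  · exact Or.inl rfl
  · exact Or.inr (Or.inr (Or.inl rfl))
  · exact Or.inr (Or.inl rfl)
  · exact Or.inr (Or.inr (Or.inr rfl))

lemma parse_zero {w : List ℕ} (h : Fact (w ++ [0])) (hlen : 7 ≤ w.length) :
    ∃ s v', w = s ++ happ v' ++ [1, 1] ∧ Fact (v' ++ [1]) ∧
      (s = [] ∨ (s = [1] ∧ Fact ([0] ++ (v' ++ [1]))) ∨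
        ((s = [0] ∨ s = [1, 0]) ∧ Fact ([1] ++ (v' ++ [1])))) := by
  rcases h with ⟨m, hm⟩
  cases m with
  | zero =>
    exfalso
    have := hm.length_le
    simp [Kword] at this
    subst this
    simp at hlen
  | succ m =>
    rw [Kword_succ] at hm
    have binU := bin_Kword m
    obtain ⟨s, v, p, heq, hv, hsctx, hpctx⟩ := full_parse hm (by simp; omega)
    -- p = []
    have hp : p = [] := by
      rcases hpctx with rfl | ⟨b, h1, h2, h3⟩
      · rfl
      · have hb : b = 0 ∨ b = 1 := binU b (h3.subset (by simp))
        rcases prefix_hsub_cases hb h1 h2 with rfl | rfl | ⟨rfl, _⟩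
        · rfl
        · exact absurd heq (concat_ne (by omega))
        · exfalso
          rw [show ([1, 1] : List ℕ) = [1] ++ [1] from rfl, ← List.append_assoc] at heq
          exact concat_ne (by omega) heq
    subst hp
    rw [List.append_nil] at heq
    -- s is short
    have hs3 : s.length ≤ 3 := by
      rcases hsctx with rfl | ⟨a, h1, _, _⟩
      · simp
      · exact h1.length_le.trans (length_hsub_le a)
    -- v = v' ++ [1]
    rcases List.eq_nil_or_concat v with rfl | ⟨v', c, rfl⟩
    · exfalso
      have := congrArg List.length heq
      simp [happ] at this
      omega
    rw [List.concat_eq_append] at hv hsctx heq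
    have hbv : Bin (v' ++ [c]) := bin_infix binU hv
    have hc : c = 0 ∨ c = 1 := hbv c (by simp)
    rcases hc with rfl | rfl
    · exfalso
      rw [happ_append, happ_single] at heq
      have : w ++ [0] = ((s ++ happ v' ++ [1]) ++ [1]) := by
        simpa [hsub, List.append_assoc] using heq
      exact concat_ne (by omega) this
    · rw [happ_append, happ_single] at heq
      have heq2 : w ++ [0] = (s ++ happ v' ++ [1, 1]) ++ [0] := by
        simpa [hsub, List.append_assoc] using heq
      have hw : w = s ++ happ v' ++ [1, 1] := List.append_cancel_right heq2
      refine ⟨s, v', hw, ⟨m, hv⟩, ?_⟩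
      have hres := sctx_resolve binU hsctx
      rcases hres with rfl | ⟨rfl, hf⟩ | ⟨hs, hf⟩
      · exact Or.inl rfl
      · exact Or.inr (Or.inl ⟨rfl, ⟨m, hf⟩⟩)
      · exact Or.inr (Or.inr ⟨hs, ⟨m, hf⟩⟩)

lemma parse_RS {w : List ℕ} (hw : RS w) (hlen : 7 ≤ w.length) :
    ∃ z, RS z ∧ z.length < w.length ∧ w <:+ psi z := by
  obtain ⟨h0, h1⟩ := hw
  obtain ⟨s, v', heqw, hfv1, hsres⟩ := parse_zero h0 hlen
  have hfv' : Fact v' := fact_infix hfv1 ⟨[], [1], by simp⟩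
  have hbv' : Bin v' := fact_bin hfv'
  have hndv' : NoDD v' := fact_noDD hfv'
  have hSLs : SL s := sres_SL hsres
  have hslen : s.length ≤ 2 := SL_length hSLs
  have hwlen : w.length = s.length + (happ v').length + 2 := by
    have := congrArg List.length heqw; simp at this; omega
  have hlenhv : 3 ≤ (happ v').length := by omega
  have hv'big : ¬(v' = [] ∨ v' = [0]) := by
    rintro (rfl | rfl) <;> simp [happ, hsub] at hlenhv
  have hgrow : 2 * v'.length ≤ (happ v').length := length_happ_ge hbv'
  -- parse the w1 occurrence
  rcases h1 with ⟨m, hm⟩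
  cases m with
  | zero =>
    exfalso
    have := hm.length_le
    simp [Kword] at this
    subst this
    simp at hlen
  | succ m =>
    rw [Kword_succ] at hm
    have binU := bin_Kword m
    obtain ⟨s2, v2, p2, heq2, hv2, hsctx2, hpctx2⟩ := full_parse hm (by simp; omega)
    have hres2 := sctx_resolve binU hsctx2
    have hSLs2 : SL s2 := sres_SL hres2
    have hs2len : s2.length ≤ 2 := SL_length hSLs2
    have hbv2 : Bin v2 := bin_infix binU hv2
    -- p2 cases
    have hp2 : p2 = [] ∨ p2 = [1] ∨ p2 = [1, 1] := by
      rcases hpctx2 with rfl | ⟨b, hb1, hb2, hb3⟩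
      · exact Or.inl rfl
      · have hb : b = 0 ∨ b = 1 := binU b (hb3.subset (by simp))
        rcases prefix_hsub_cases hb hb1 hb2 with rfl | rfl | ⟨rfl, _⟩
        · exact Or.inl rfl
        · exact Or.inr (Or.inl rfl)
        · exact Or.inr (Or.inr rfl)
    rcases hp2 with rfl | rfl | rfl
    · -- p2 = [] : dead case
      exfalso
      rw [List.append_nil] at heq2
      rcases List.eq_nil_or_concat v2 with rfl | ⟨z, c, rfl⟩
      · have := congrArg List.length heq2
        simp [happ] at this
        omega
      rw [List.concat_eq_append] at hv2 heq2 hbv2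
      have hbz : Bin z := fun x hx => hbv2 x (by simp [hx])
      have hc : c = 0 ∨ c = 1 := hbv2 c (by simp)
      rw [happ_append, happ_single] at heq2
      rcases hc with rfl | rfl
      · -- c = 0 : w ++ [1] = s2 ++ (happ z ++ [1,1])
        have heq3 : w ++ [1] = (s2 ++ (happ z ++ [1])) ++ [1] := by
          simpa [hsub, List.append_assoc] using heq2
        have hww : w = s2 ++ (happ z ++ [1]) := List.append_cancel_right heq3
        have hkey : s ++ (happ v' ++ [1]) = s2 ++ happ z := by
          have h' : (s ++ (happ v' ++ [1])) ++ [1] = (s2 ++ happ z) ++ [1] := by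
            simpa [List.append_assoc] using (heqw.symm.trans hww)
          exact List.append_cancel_right h'
        exact hv'big (EqMaster hSLs hSLs2 hbv' hbz hndv' hkey)
      · -- c = 1 : w ++ [1] ends in 0, contradiction
        have h' : w ++ [1] = (s2 ++ (happ z ++ [1, 1])) ++ [0] := by
          simpa [hsub, List.append_assoc] using heq2
        exact concat_ne (by omega) h'
    · -- p2 = [1] : live case
      have hww : w = s2 ++ happ v2 := List.append_cancel_right heq2
      rcases List.eq_nil_or_concat v2 with rfl | ⟨z, c, rfl⟩
      · exfalso
        have := congrArg List.length hww
        simp [happ] at this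
        omega
      rw [List.concat_eq_append] at hv2 hww hbv2
      have hbz : Bin z := fun x hx => hbv2 x (by simp [hx])
      have hc : c = 0 ∨ c = 1 := hbv2 c (by simp)
      rw [happ_append, happ_single] at hww
      rcases hc with rfl | rfl
      · -- c = 0 : w = s2 ++ happ z ++ [1,1]
        have heqz : s ++ happ v' ++ [1, 1] = s2 ++ happ z ++ [1, 1] := by
          have := heqw.symm.trans hww
          rw [hsub, ← List.append_assoc] at this
          exact this
        have hcan : s ++ happ v' = s2 ++ happ z := List.append_cancel_right heqz
        obtain ⟨hss, hvz⟩ := Ustar hSLs hSLs2 hbv' hbz hcan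
        subst hss
        subst hvz
        -- now we have Fact (v' ++ [0]) and Fact (v' ++ [1])
        have hfv0 : Fact (v' ++ [0]) := ⟨m, hv2⟩
        rcases hsres with rfl | ⟨rfl, hP⟩ | ⟨hs01, hP⟩
        · -- s = []
          refine ⟨v', ⟨hfv0, hfv1⟩, by omega, ?_⟩
          have : w = psi v' := by rw [heqw]; simp [psi]
          rw [this]
        · -- s = [1], z' = 0 :: v'
          rcases hres2 with habs | ⟨_, hf2⟩ | ⟨habs, _⟩
          · exact absurd habs (by simp)
          · refine ⟨0 :: v', ⟨⟨m, by simpa using hf2⟩, ?_⟩, by simp; omega, ?_⟩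
            · rcases hP with ⟨mm, hh⟩
              exact ⟨mm, by simpa using hh⟩
            · refine ⟨[1], ?_⟩
              rw [heqw]
              simp [psi, happ_cons, hsub]
          · rcases habs with habs | habs <;> simp at habs
        · -- s = [0] or s = [1,0], z' = 1 :: v'
          have hf2 : Fact ((1 :: v') ++ [0]) := by
            rcases hres2 with habs | ⟨habs, _⟩ | ⟨_, hf2⟩
            · exfalso; rcases hs01 with rfl | rfl <;> simp at habs
            · exfalso; rcases hs01 with rfl | rfl <;> simp at habs
            · rcases hf2 with hf2
              exact ⟨m, by simpa using hf2⟩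
          have hf1 : Fact ((1 :: v') ++ [1]) := by
            rcases hP with ⟨mm, hh⟩
            exact ⟨mm, by simpa using hh⟩
          refine ⟨1 :: v', ⟨hf2, hf1⟩, by simp; omega, ?_⟩
          rcases hs01 with rfl | rfl
          · refine ⟨[1, 1], ?_⟩
            rw [heqw]
            simp [psi, happ_cons, hsub]
          · refine ⟨[1], ?_⟩
            rw [heqw]
            simp [psi, happ_cons, hsub]
      · -- c = 1 : w ends in 0, contradiction with w = s ++ happ v' ++ [1,1]
        exfalso
        have h' : (s ++ (happ v' ++ [1])) ++ [1] = (s2 ++ (happ z ++ [1, 1])) ++ [0] := by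
          simpa [hsub, List.append_assoc] using (heqw.symm.trans hww)
        exact concat_ne (by omega) h'
    · -- p2 = [1,1] : dead case
      exfalso
      have heq3 : w ++ [1] = ((s2 ++ happ v2) ++ [1]) ++ [1] := by
        simpa [List.append_assoc] using heq2
      have hww : w = (s2 ++ happ v2) ++ [1] := List.append_cancel_right heq3
      have hkey : s ++ (happ v' ++ [1]) = s2 ++ happ v2 := by
        have h' : (s ++ (happ v' ++ [1])) ++ [1] = (s2 ++ happ v2) ++ [1] := by
          simpa [List.append_assoc] using (heqw.symm.trans hww)
        exact List.append_cancel_right h'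
      exact hv'big (EqMaster hSLs hSLs2 hbv' hbv2 hndv' hkey)

lemma prefix_shrink : ∀ u y, Bin u → y <+: happ u → y ≠ [] →
    ∃ v, v <+: u ∧ y <+: happ v ∧ 1 ≤ v.length ∧ v.length ≤ y.length := by
  intro u
  induction u with
  | nil =>
    intro y _ hy hne
    rw [happ_nil, List.prefix_nil] at hy
    exact absurd hy hne
  | cons b u' ih =>
    intro y hu hy hne
    rw [happ_cons] at hy
    have hb2 : 2 ≤ (hsub b).length := length_hsub_bin (hu b (List.mem_cons_self))
    have hylen : 1 ≤ y.length := List.length_pos_iff.2 hne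
    rcases le_total y.length (hsub b).length with hl | hl
    · have : y <+: hsub b := List.prefix_of_prefix_length_le hy (List.prefix_append _ _) hl
      exact ⟨[b], ⟨u', rfl⟩, by rwa [happ_single], by simp, by simpa using hylen⟩
    · have hby : hsub b <+: y :=
        List.prefix_of_prefix_length_le (List.prefix_append _ _) hy hl
      rcases hby with ⟨y', rfl⟩
      have hy' : y' <+: happ u' := by
        rcases hy with ⟨t, ht⟩
        rw [List.append_assoc] at ht
        exact ⟨t, List.append_cancel_left ht⟩
      by_cases hy'ne : y' = []
      · subst hy'ne
        exact ⟨[b], ⟨u', rfl⟩, by rw [happ_single]; simp, by simp, by simp; omega⟩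
      · obtain ⟨v, hvu, hyv, hv1, hv2⟩ := ih y' (bin_tail hu) hy' hy'ne
        refine ⟨b :: v, ?_, ?_, by simp, ?_⟩
        · rcases hvu with ⟨t, rfl⟩; exact ⟨t, rfl⟩
        · rw [happ_cons]
          rcases hyv with ⟨t, ht⟩
          exact ⟨t, by rw [List.append_assoc, ht]⟩
        · simp
          have : y'.length ≤ (hsub b ++ y').length := by simp
          simp at this ⊢
          omega

lemma infix_shrink : ∀ u w, Bin u → w <:+: happ u → w ≠ [] →
    ∃ v, v <:+: u ∧ w <:+: happ v ∧ v.length ≤ w.length := by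
  intro u
  induction u with
  | nil =>
    intro w _ hw hne
    rw [happ_nil, List.infix_nil] at hw
    exact absurd hw hne
  | cons a u' ih =>
    intro w hu hw hne
    rw [happ_cons] at hw
    rcases hw with ⟨A, B, hAB⟩
    rcases le_total (hsub a).length A.length with hl | hl
    · -- w inside happ u'
      have hA : A <+: hsub a ++ happ u' := ⟨w ++ B, by rw [← List.append_assoc]; exact hAB⟩
      have hsa : hsub a <+: A :=
        List.prefix_of_prefix_length_le (List.prefix_append _ _) hA hl
      rcases hsa with ⟨A', rfl⟩
      have hw' : w <:+: happ u' := by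
        refine ⟨A', B, ?_⟩
        have h2 : hsub a ++ (A' ++ w ++ B) = hsub a ++ happ u' := by
          simpa [List.append_assoc] using hAB
        exact List.append_cancel_left h2
      obtain ⟨v, hvu, hwv, hlen⟩ := ih w (bin_tail hu) hw' hne
      exact ⟨v, hvu.trans ⟨[a], [], by simp⟩, hwv, hlen⟩
    · -- w starts inside hsub a
      have hA : A <+: hsub a := by
        refine List.prefix_of_prefix_length_le ⟨w ++ B, by rw [← List.append_assoc]; exact hAB⟩
          (List.prefix_append _ _) hl
      rcases hA with ⟨r, hr⟩
      have hwB : w ++ B = r ++ happ u' := by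
        have : A ++ (w ++ B) = A ++ (r ++ happ u') := by
          rw [← List.append_assoc, hAB, ← hr, List.append_assoc]
        exact List.append_cancel_left this
      rcases le_total w.length r.length with hwr | hwr
      · -- w inside hsub a
        have hwrp : w <+: r :=
          List.prefix_of_prefix_length_le ⟨B, rfl⟩ ⟨happ u', hwB.symm⟩ hwr
        refine ⟨[a], ⟨[], u', by simp⟩, ?_, by have := List.length_pos_iff.2 hne; simp; omega⟩
        rw [happ_single]
        have hra : r <:+ hsub a := ⟨A, hr⟩
        exact hwrp.isInfix.trans hra.isInfix
      · have hrw : r <+: w :=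
          List.prefix_of_prefix_length_le ⟨happ u', hwB.symm⟩ ⟨B, rfl⟩ hwr
        rcases hrw with ⟨w2, rfl⟩
        have hw2 : w2 ++ B = happ u' := by
          have : r ++ (w2 ++ B) = r ++ happ u' := by
            rw [← List.append_assoc]; exact hwB
          exact List.append_cancel_left this
        by_cases hrnil : r = []
        · -- use v from prefix side only
          subst hrnil
          simp only [List.nil_append] at *
          have hw2p : w2 <+: happ u' := ⟨B, hw2⟩
          obtain ⟨v, hvu, hwv, _, hvlen⟩ := prefix_shrink u' w2 (bin_tail hu) hw2p hne
          exact ⟨v, hvu.isInfix.trans ⟨[a], [], by simp⟩, hwv.isInfix, hvlen⟩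
        · by_cases hw2nil : w2 = []
          · subst hw2nil
            refine ⟨[a], ⟨[], u', by simp⟩, ?_, ?_⟩
            · rw [happ_single]
              have hrs : r ++ [] <:+ hsub a := by rw [List.append_nil]; exact (⟨A, hr⟩ : r <:+ hsub a)
              exact hrs.isInfix
            · have : 1 ≤ r.length := List.length_pos_iff.2 hrnil
              simp
              omega
          · have hw2p : w2 <+: happ u' := ⟨B, hw2⟩
            obtain ⟨v, hvu, hwv, hv1, hvlen⟩ :=
              prefix_shrink u' w2 (bin_tail hu) hw2p hw2nil
            refine ⟨a :: v, ?_, ?_, ?_⟩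
            · rcases hvu with ⟨t, rfl⟩
              exact ⟨[], t, by simp⟩
            · rw [happ_cons]
              exact suffix_append_prefix_infix ⟨A, hr⟩ hwv
            · have : 1 ≤ r.length := List.length_pos_iff.2 hrnil
              simp at this ⊢
              omega

def S7 : List (List ℕ) := [[0], [1], [0, 1], [1, 0], [1, 1], [0, 1, 1], [1, 0, 1], [1, 1, 0], [1, 1, 1], [0, 1, 1, 0], [0, 1, 1, 1], [1, 0, 1, 1], [1, 1, 0, 1], [1, 1, 1, 0], [1, 1, 1, 1], [0, 1, 1, 0, 1], [0, 1, 1, 1, 1], [1, 0, 1, 1, 0], [1, 0, 1, 1, 1], [1, 1, 0, 1, 1], [1, 1, 1, 0, 1], [1, 1, 1, 1, 0], [0, 1, 1, 0, 1, 1], [0, 1, 1, 1, 1, 0], [1, 0, 1, 1, 0, 1], [1, 0, 1, 1, 1, 1], [1, 1, 0, 1, 1, 0], [1, 1, 0, 1, 1, 1], [1, 1, 1, 0, 1, 1], [1, 1, 1, 1, 0, 1], [0, 1, 1, 0, 1, 1, 0], [0, 1, 1, 0, 1, 1, 1], [0, 1, 1, 1, 1, 0, 1], [1, 0, 1, 1,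 0, 1, 1], [1, 0, 1, 1, 1, 1, 0], [1, 1, 0, 1, 1, 0, 1], [1, 1, 0, 1, 1, 1, 1], [1, 1, 1, 0, 1, 1, 0], [1, 1, 1, 1, 0, 1, 1]]

set_option maxHeartbeats 1000000 in
lemma S7_closedA : ∀ v ∈ S7, ∀ i < 22, ((happ v).drop i).take 7 = [] ∨
    ((happ v).drop i).take 7 ∈ S7 := by decide

set_option maxHeartbeats 1000000 in
lemma S7_closedB : ∀ T ∈ S7, ∀ n < 8, (T.take n = [] ∨ T.take n ∈ S7) := by decide

lemma S7_short : ∀ v ∈ S7, (v : List ℕ).length ≤ 7 := by decide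

lemma S7_happ_len : ∀ v ∈ S7, (happ v).length ≤ 21 := by decide

lemma S7_closed {v w : List ℕ} (hv : v ∈ S7) (hw : w <:+: happ v) (hne : w ≠ [])
    (hlen : w.length ≤ 7) : w ∈ S7 := by
  rcases hw with ⟨A, B, hAB⟩
  -- w = take |w| (drop |A| (happ v))
  have hdrop : (happ v).drop A.length = w ++ B := by
    rw [← hAB, List.append_assoc, List.drop_left]
  have hwtake : w = ((happ v).drop A.length).take w.length := by
    rw [hdrop, List.take_left]
  have hA22 : A.length < 22 := by
    by_contra hge
    push_neg at hge
    have : (happ v).length ≤ 21 := S7_happ_len v hv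
    have : (happ v).drop A.length = [] := List.drop_eq_nil_of_le (by omega)
    rw [this] at hwtake
    simp at hwtake
    exact hne hwtake
  have hT := S7_closedA v hv A.length hA22
  set T := ((happ v).drop A.length).take 7 with hTdef
  have hwT : w = T.take w.length := by
    rw [hTdef, List.take_take]
    simpa [min_eq_left hlen] using hwtake
  rcases hT with hTnil | hTmem
  · rw [hTnil] at hwT
    simp at hwT
    exact absurd hwT hne
  · have := S7_closedB T hTmem w.length (by omega)
    rcases this with h | h
    · rw [← hwT] at h
      exact absurd h hne
    · rwa [← hwT] at h

lemma factors_le7 : ∀ m w, w ≠ [] → w.length ≤ 7 → w <:+: Kword m → w ∈ S7 := by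
  intro m
  induction m with
  | zero =>
    intro w hne hlen hw
    rcases hw with ⟨A, B, hAB⟩
    have hl := congrArg List.length hAB
    simp [Kword] at hl
    have hA : A = [] := List.length_eq_zero_iff.1 (by have := List.length_pos_iff.2 hne; omega)
    have hB : B = [] := List.length_eq_zero_iff.1 (by have := List.length_pos_iff.2 hne; omega)
    subst hA; subst hB
    simp [Kword] at hAB
    subst hAB
    decide
  | succ m ih =>
    intro w hne hlen hw
    rw [Kword_succ] at hw
    obtain ⟨v, hvK, hwv, hvlen⟩ := infix_shrink (Kword m) w (bin_Kword m) hw hne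
    have hvne : v ≠ [] := by
      rintro rfl
      rw [happ_nil, List.infix_nil] at hwv
      exact hne hwv
    have hv7 : v ∈ S7 := ih v hvne (by omega) hvK
    exact S7_closed hv7 hwv hne hlen

lemma fact_mem_S7 {w : List ℕ} (h : Fact w) (hne : w ≠ []) (hlen : w.length ≤ 7) :
    w ∈ S7 := by
  rcases h with ⟨m, hm⟩
  exact factors_le7 m w hne hlen hm

set_option maxHeartbeats 1000000 in
lemma base_check : ∀ u ∈ S7, u.getLast? = some 0 → (u.dropLast ++ [1]) ∈ S7 →
    (u.dropLast <:+ Mainw 2 ∨ u.dropLast = [1, 1, 1]) := by decide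

lemma RS_small {w : List ℕ} (h : RS w) (hlen : w.length ≤ 6) :
    w <:+ Mainw 2 ∨ w = [1, 1, 1] := by
  obtain ⟨h0, h1⟩ := h
  have hm0 : w ++ [0] ∈ S7 := fact_mem_S7 h0 (by simp) (by simp; omega)
  have hm1 : w ++ [1] ∈ S7 := fact_mem_S7 h1 (by simp) (by simp; omega)
  have := base_check (w ++ [0]) hm0 (by simp) (by simpa using hm1)
  simpa using this

lemma bin_psi {u : List ℕ} : Bin (psi u) := by
  apply bin_append bin_happ
  intro a ha; simp at ha; omega

lemma bin_Mainw (m : ℕ) : Bin (Mainw m) := by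
  cases m with
  | zero => intro a ha; simp [Mainw] at ha; omega
  | succ m => exact bin_psi

lemma bin_Sidew (m : ℕ) : Bin (Sidew m) := by
  cases m with
  | zero => intro a ha; simp [Sidew] at ha; omega
  | succ m => exact bin_psi

lemma bin_Branchw (m : ℕ) : Bin (Branchw m) := by
  cases m with
  | zero => intro a ha; simp [Branchw] at ha; omega
  | succ m => exact bin_psi

lemma len_psi {u : List ℕ} (hu : Bin u) :
    (psi u).length = 2 * u.length + u.count 1 + 2 := by
  simp [psi, length_happ hu]

lemma count_psi {u : List ℕ} (hu : Bin u) :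
    (psi u).count 1 = 2 * u.length + 2 := by
  simp [psi, List.count_append, count_happ hu]

lemma main_suffix_succ (M : ℕ) : Mainw M <:+ Mainw (M + 1) := by
  induction M with
  | zero => decide
  | succ M ih => exact psi_suffix ih

lemma main_suffix_le {a b : ℕ} (h : a ≤ b) : Mainw a <:+ Mainw b := by
  induction b with
  | zero => rw [Nat.le_zero.1 h]
  | succ b ih =>
    rcases Nat.lt_or_ge a (b + 1) with hl | hl
    · exact (ih (by omega)).trans (main_suffix_succ b)
    · rw [Nat.le_antisymm h hl]

lemma branch_suffix_main (m : ℕ) : Branchw m <:+ Mainw (m + 1) := by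
  induction m with
  | zero => decide
  | succ m ih => exact psi_suffix ih

lemma branch_suffix_side (m : ℕ) : Branchw m <:+ Sidew m := by
  induction m with
  | zero => decide
  | succ m ih => exact psi_suffix ih

lemma side_lt_branch : ∀ m, (Sidew m).length < (Branchw (m + 1)).length ∧
    (Sidew m).count 1 ≤ (Branchw (m + 1)).count 1 := by
  intro m
  induction m with
  | zero => decide
  | succ m ih =>
    have h1 : (Sidew (m+1)).length = 2 * (Sidew m).length + (Sidew m).count 1 + 2 :=
      len_psi (bin_Sidew m)
    have h2 : (Sidew (m+1)).count 1 = 2 * (Sidew m).length + 2 :=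
      count_psi (bin_Sidew m)
    have h3 : (Branchw (m+2)).length =
        2 * (Branchw (m+1)).length + (Branchw (m+1)).count 1 + 2 :=
      len_psi (bin_Branchw (m+1))
    have h4 : (Branchw (m+2)).count 1 = 2 * (Branchw (m+1)).length + 2 :=
      count_psi (bin_Branchw (m+1))
    constructor
    · rw [h1, h3]; omega
    · rw [h2, h4]; omega

lemma branch_mono : ∀ m, (Branchw m).length < (Branchw (m + 1)).length := by
  intro m
  have h := len_psi (bin_Branchw m)
  have : (Branchw (m+1)).length = 2 * (Branchw m).length + (Branchw m).count 1 + 2 := h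
  have hpos : 0 < (Branchw m).length := by
    cases m with
    | zero => decide
    | succ m =>
      have := len_psi (bin_Branchw m)
      simp only [Branchw] at *
      omega
  omega

lemma branch_le {a b : ℕ} (h : a ≤ b) : (Branchw a).length ≤ (Branchw b).length := by
  induction b with
  | zero => rw [Nat.le_zero.1 h]
  | succ b ih =>
    rcases Nat.lt_or_ge a (b + 1) with hl | hl
    · have := branch_mono b
      have := ih (by omega)
      omega
    · rw [Nat.le_antisymm h hl]

/-- every right-special factor is a suffix of a main word or a side word -/
lemma char : ∀ n w, w.length ≤ n → RS w → w ≠ [] →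
    (∃ M, w <:+ Mainw M) ∨ (∃ m, w <:+ Sidew m) := by
  intro n
  induction n using Nat.strong_induction_on with
  | _ n ih =>
    intro w hwn hw hne
    rcases le_or_gt w.length 6 with h6 | h6
    · rcases RS_small hw h6 with h | h
      · exact Or.inl ⟨2, h⟩
      · exact Or.inr ⟨0, by rw [h]; decide⟩
    · obtain ⟨z, hzRS, hzlen, hzsuf⟩ := parse_RS hw (by omega)
      have hzne : z ≠ [] := by
        rintro rfl
        have := hzsuf.length_le
        simp [psi, happ] at this
        omega
      have hn1 : z.length < n := by omega
      rcases ih z.length hn1 z le_rfl hzRS hzne with ⟨M, hM⟩ | ⟨m, hm⟩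
      · exact Or.inl ⟨M + 1, hzsuf.trans (psi_suffix hM)⟩
      · exact Or.inr ⟨m + 1, hzsuf.trans (psi_suffix hm)⟩

lemma main_unique {w w' : List ℕ} {M M' : ℕ} (h : w <:+ Mainw M) (h' : w' <:+ Mainw M')
    (hl : w.length = w'.length) : w = w' := by
  have h1 : w <:+ Mainw (max M M') := h.trans (main_suffix_le (le_max_left _ _))
  have h2 : w' <:+ Mainw (max M M') := h'.trans (main_suffix_le (le_max_right _ _))
  exact suffix_eq_of_length h1 h2 hl

lemma two_classes {w w' : List ℕ} (hw : RS w) (hw' : RS w') (hne : w ≠ []) (hne' : w' ≠ [])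
    (hl : w.length = w'.length) :
    w = w' ∨ (∃ M, w <:+ Mainw M) ∨ (∃ M, w' <:+ Mainw M) := by
  rcases char w.length w le_rfl hw hne with hM | ⟨m, hm⟩
  · exact Or.inr (Or.inl hM)
  rcases char w'.length w' le_rfl hw' hne' with hM | ⟨m', hm'⟩
  · exact Or.inr (Or.inr hM)
  rcases lt_trichotomy m m' with hmm | rfl | hmm
  · -- w' is in fact a suffix of a main word
    refine Or.inr (Or.inr ⟨m' + 1, ?_⟩)
    have hlb : w'.length ≤ (Branchw m').length := by
      have h1 : w.length ≤ (Sidew m).length := hm.length_le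
      have h2 := (side_lt_branch m).1
      have h3 : (Branchw (m + 1)).length ≤ (Branchw m').length := branch_le (by omega)
      omega
    have : w' <:+ Branchw m' :=
      List.suffix_of_suffix_length_le hm' (branch_suffix_side m') hlb
    exact this.trans (branch_suffix_main m')
  · exact Or.inl (suffix_eq_of_length hm hm' hl)
  · refine Or.inr (Or.inl ⟨m + 1, ?_⟩)
    have hlb : w.length ≤ (Branchw m).length := by
      have h1 : w'.length ≤ (Sidew m').length := hm'.length_le
      have h2 := (side_lt_branch m').1
      have h3 : (Branchw (m' + 1)).length ≤ (Branchw m).length := branch_le (by omega)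
      omega
    have : w <:+ Branchw m :=
      List.suffix_of_suffix_length_le hm (branch_suffix_side m) hlb
    exact this.trans (branch_suffix_main m)

end RSaux

namespace RSaux

lemma Kword_len_lb : ∀ m, m + 1 ≤ (Kword m).length := by
  intro m
  induction m with
  | zero => simp [Kword]
  | succ m ih =>
    rw [Kword_succ]
    have h1 := length_happ_ge (bin_Kword m)
    omega

lemma isfactor_fact {k : ℕ → ℕ}
    (hk : ∀ (m i : ℕ), i < (Kword m).length → k (i + 1) = (Kword m).getD i 0)
    {u : List ℕ} (h : IsFactor k u) : Fact u := by
  obtain ⟨i, hi1, hj⟩ := h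
  set m := i + u.length with hm
  have hKlen : i + u.length ≤ (Kword m).length := by have := Kword_len_lb m; omega
  refine ⟨m, ?_⟩
  have htake : u = ((Kword m).drop (i - 1)).take u.length := by
    apply List.ext_getElem
    · simp; omega
    · intro j hj1 hj2
      have hlt : i - 1 + j < (Kword m).length := by omega
      have hR : (((Kword m).drop (i - 1)).take u.length)[j] = (Kword m)[i - 1 + j]'hlt := by
        rw [List.getElem_take, List.getElem_drop]
      rw [hR]
      have h1 : u[j] = u.getD j 0 := (List.getD_eq_getElem u 0 hj1).symm
      have h2 : u.getD j 0 = k (i + j) := hj j hj1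
      have h3 : k ((i - 1 + j) + 1) = (Kword m).getD (i - 1 + j) 0 := hk m _ hlt
      have h4 : i - 1 + j + 1 = i + j := by omega
      rw [h1, h2, ← h4, h3, List.getD_eq_getElem _ 0 hlt]
  rw [htake]
  exact (List.take_prefix _ _).isInfix.trans (List.drop_suffix _ _).isInfix

end RSaux

/-- For every `n ≥ 1`, the fixed point `k` of `h` has at most two distinct
right-special factors of length `n`. -/
theorem at_most_two_right_special
    (k : ℕ → ℕ)
    (hk : ∀ (m i : ℕ), i < (Kword m).length → k (i + 1) = (Kword m).getD i 0) :
    ∀ n : ℕ, 1 ≤ n →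
      ∀ w₁ w₂ w₃ : List ℕ,
        w₁.length = n → w₂.length = n → w₃.length = n →
        IsRightSpecial k w₁ → IsRightSpecial k w₂ → IsRightSpecial k w₃ →
        w₁ = w₂ ∨ w₁ = w₃ ∨ w₂ = w₃ := by
  intro n hn w₁ w₂ w₃ hl1 hl2 hl3 hr1 hr2 hr3
  have toRS : ∀ w : List ℕ, IsRightSpecial k w → RSaux.RS w := fun w hw =>
    ⟨RSaux.isfactor_fact hk hw.1, RSaux.isfactor_fact hk hw.2⟩
  have hne : ∀ w : List ℕ, w.length = n → w ≠ [] := by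
    intro w hw hc; rw [hc] at hw; simp at hw; omega
  by_contra hcon
  push_neg at hcon
  obtain ⟨h12, h13, h23⟩ := hcon
  rcases RSaux.two_classes (toRS _ hr1) (toRS _ hr2) (hne _ hl1) (hne _ hl2)
      (hl1.trans hl2.symm) with he | ⟨M1, hM1⟩ | ⟨M2, hM2⟩
  · exact h12 he
  · rcases RSaux.two_classes (toRS _ hr2) (toRS _ hr3) (hne _ hl2) (hne _ hl3)
        (hl2.trans hl3.symm) with he | ⟨M2, hM2⟩ | ⟨M3, hM3⟩
    · exact h23 he
    · exact h12 (RSaux.main_unique hM1 hM2 (hl1.trans hl2.symm))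
    · exact h13 (RSaux.main_unique hM1 hM3 (hl1.trans hl3.symm))
  · rcases RSaux.two_classes (toRS _ hr1) (toRS _ hr3) (hne _ hl1) (hne _ hl3)
        (hl1.trans hl3.symm) with he | ⟨M1, hM1⟩ | ⟨M3, hM3⟩
    · exact h13 he
    · exact h12 (RSaux.main_unique hM1 hM2 (hl1.trans hl2.symm))
    · exact h23 (RSaux.main_unique hM2 hM3 (hl2.trans hl3.symm))
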